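/- Let G = P_m □ P_n and let c be an exact r-coloring of G with r ≥ 3 that contains no rainbow 3-AP. If c(v_{i,j}) = red and c(v_{i−1,j+1}) = blue, then c(v_{k,ℓ}) ∈ {red, blue} for every vertex v_{k,ℓ} with (k ≥ i and ℓ ≥ j+1) or (k ≤ i−1 and ℓ ≤ j). Similarly, if c(v_{i,j}) = red and c(v_{i−1,j−1}) = blue, then c(v_{k,ℓ}) ∈ {red, blue} for every vertex v_{k,ℓ} with (k ≥ i and ℓ ≤ j−1) or (k ≤ i−1 and ℓ ≥ j). -/

import Mathlib

open SimpleGraph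

lemma path_walk_exists (n : ℕ) : ∀ (d : ℕ) (u v : Fin n), (u : ℕ) + d = (v : ℕ) →
    ∃ w : (pathGraph n).Walk u v, w.length = d := by
  intro d
  induction d with
  | zero =>
    intro u v h
    have : u = v := Fin.ext (by omega)
    subst this
    exact ⟨.nil, rfl⟩
  | succ d ih =>
    intro u v h
    have hu1 : (u : ℕ) + 1 < n := by omega
    obtain ⟨w, hw⟩ := ih ⟨(u : ℕ) + 1, hu1⟩ v (by simp; omega)
    exact ⟨.cons (pathGraph_adj.mpr (Or.inl rfl)) w, by simp [hw]⟩

lemma path_walk_exists' (n : ℕ) (u v : Fin n) :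
    ∃ w : (pathGraph n).Walk u v, w.length = ((u : ℕ) - v) + ((v : ℕ) - u) := by
  rcases le_total (u : ℕ) (v : ℕ) with h | h
  · obtain ⟨w, hw⟩ := path_walk_exists n ((v : ℕ) - u) u v (by omega)
    exact ⟨w, by omega⟩
  · obtain ⟨w, hw⟩ := path_walk_exists n ((u : ℕ) - v) v u (by omega)
    exact ⟨w.reverse, by simp [hw]; omega⟩

lemma walk_abs_le {V : Type*} {G : SimpleGraph V} (f : V → ℤ)
    (hf : ∀ a b, G.Adj a b → |f a - f b| ≤ 1) :
    ∀ {u v : V} (w : G.Walk u v), |f u - f v| ≤ (w.length : ℤ) := by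
  intro u v w
  induction w with
  | nil => simp
  | cons h p ih =>
    rename_i a b c'
    have h1 := hf _ _ h
    have h2 : |f a - f c'| ≤ |f a - f b| + |f b - f c'| := abs_sub_le _ _ _
    simp only [SimpleGraph.Walk.length_cons]
    push_cast
    linarith

lemma grid_dist (m n : ℕ) (x y : Fin m × Fin n) :
    (pathGraph m □ pathGraph n).dist x y =
      (((x.1 : ℕ) - y.1) + ((y.1 : ℕ) - x.1)) + (((x.2 : ℕ) - y.2) + ((y.2 : ℕ) - x.2)) := by
  obtain ⟨x1, x2⟩ := x
  obtain ⟨y1, y2⟩ := y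
  dsimp only
  obtain ⟨w1, hw1⟩ := path_walk_exists' m x1 y1
  obtain ⟨w2, hw2⟩ := path_walk_exists' n x2 y2
  have hub : (pathGraph m □ pathGraph n).dist (x1, x2) (y1, y2) ≤
      (((x1 : ℕ) - y1) + ((y1 : ℕ) - x1)) + (((x2 : ℕ) - y2) + ((y2 : ℕ) - x2)) := by
    have hd := SimpleGraph.dist_le ((w1.boxProdLeft (pathGraph n) x2).append
      (w2.boxProdRight (pathGraph m) y1))
    have hl : ((w1.boxProdLeft (pathGraph n) x2).append
        (w2.boxProdRight (pathGraph m) y1)).length = w1.length + w2.length := by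
      rw [SimpleGraph.Walk.length_append]
      exact congrArg₂ (· + ·) (SimpleGraph.Walk.length_map ..) (SimpleGraph.Walk.length_map ..)
    rwa [hl, hw1, hw2] at hd
  have hreach : (pathGraph m □ pathGraph n).Reachable (x1, x2) (y1, y2) :=
    ((pathGraph_preconnected m).boxProd (pathGraph_preconnected n)) _ _
  obtain ⟨w, hw⟩ := hreach.exists_walk_length_eq_dist
  have hf1 : ∀ a b : Fin m × Fin n, (pathGraph m □ pathGraph n).Adj a b →
      |((a.1 : ℤ) + (a.2 : ℤ)) - ((b.1 : ℤ) + (b.2 : ℤ))| ≤ 1 := by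
    rintro ⟨a1, a2⟩ ⟨b1, b2⟩ hab
    show |((a1 : ℤ) + (a2 : ℤ)) - ((b1 : ℤ) + (b2 : ℤ))| ≤ 1
    rcases hab with ⟨h, h2⟩ | ⟨h, h2⟩ <;>
      · dsimp only at h h2
        rw [pathGraph_adj] at h
        rw [Fin.ext_iff] at h2
        rw [abs_le]
        omega
  have hf2 : ∀ a b : Fin m × Fin n, (pathGraph m □ pathGraph n).Adj a b →
      |((a.1 : ℤ) - (a.2 : ℤ)) - ((b.1 : ℤ) - (b.2 : ℤ))| ≤ 1 := by
    rintro ⟨a1, a2⟩ ⟨b1, b2⟩ hab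
    show |((a1 : ℤ) - (a2 : ℤ)) - ((b1 : ℤ) - (b2 : ℤ))| ≤ 1
    rcases hab with ⟨h, h2⟩ | ⟨h, h2⟩ <;>
      · dsimp only at h h2
        rw [pathGraph_adj] at h
        rw [Fin.ext_iff] at h2
        rw [abs_le]
        omega
  have h1 : |((x1 : ℤ) + (x2 : ℤ)) - ((y1 : ℤ) + (y2 : ℤ))| ≤ (w.length : ℤ) :=
    walk_abs_le (fun p : Fin m × Fin n => (p.1 : ℤ) + (p.2 : ℤ)) hf1 w
  have h2 : |((x1 : ℤ) - (x2 : ℤ)) - ((y1 : ℤ) - (y2 : ℤ))| ≤ (w.length : ℤ) :=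
    walk_abs_le (fun p : Fin m × Fin n => (p.1 : ℤ) - (p.2 : ℤ)) hf2 w
  rw [abs_le] at h1 h2
  rw [hw] at h1 h2
  omega

/-- `v` lists the vertices of a `k`-term arithmetic progression in `G`:
consecutive vertices are at a common distance `d`. -/
def IsAPIn {V : Type*} (G : SimpleGraph V) (k : ℕ) (v : Fin k → V) : Prop :=
  ∃ d : ℕ, ∀ (i : ℕ) (h : i + 1 < k),
    G.dist (v ⟨i, by omega⟩) (v ⟨i + 1, h⟩) = d

/-- The coloring `c` admits a rainbow `k`-AP in `G`: a `k`-AP whose vertices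
are pairwise distinct and receive pairwise distinct colors. -/
def HasRainbowAP {V α : Type*} (G : SimpleGraph V) (k : ℕ) (c : V → α) : Prop :=
  ∃ v : Fin k → V, IsAPIn G k v ∧ Function.Injective (c ∘ v)

/-- The anti-van der Waerden number `aw(G,k)`: the least positive `r` such that
every exact `r`-coloring of `G` contains a rainbow `k`-AP.  (For `r = |V(G)|+1`
there is no surjection onto `r` colors, so the defining set is nonempty and
`aw(G,k) ≤ |V(G)|+1` automatically, matching the convention.) -/
noncomputable def aw {V : Type*} [Fintype V] (G : SimpleGraph V) (k : ℕ) : ℕ :=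
  sInf {r : ℕ | 0 < r ∧ ∀ c : V → Fin r, Function.Surjective c → HasRainbowAP G k c}


lemma rainbow_of_mid {V α : Type*} (G : SimpleGraph V) (c : V → α) (A W B : V)
    (hd : G.dist A W = G.dist W B)
    (h1 : c A ≠ c W) (h2 : c W ≠ c B) (h3 : c A ≠ c B) :
    HasRainbowAP G 3 c := by
  refine ⟨![A, W, B], ⟨G.dist A W, ?_⟩, ?_⟩
  · intro i hi
    have hi2 : i < 2 := by omega
    interval_cases i
    · simp
    · simpa using hd.symm
  · intro x y hxy
    fin_cases x <;> fin_cases y <;> simp_all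

/-- the block lemma for grids `P_m □ P_n` (indices here are
`0`-based, so the paper's `v_{i,j}` with `i-1 ≥ 1` corresponds to `1 ≤ i` below,
and "k ≤ i-1" becomes `k < i`). -/
theorem block_lemma (m n r : ℕ) (hr : 3 ≤ r)
    (c : Fin m × Fin n → Fin r) (hc : Function.Surjective c)
    (hnr : ¬ HasRainbowAP (pathGraph m □ pathGraph n) 3 c)
    (red blue : Fin r) (hrb : red ≠ blue) :
    (∀ (i j : ℕ) (hi1 : 1 ≤ i) (hi : i < m) (hj : j + 1 < n),
      c (⟨i, hi⟩, ⟨j, by omega⟩) = red →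
      c (⟨i - 1, by omega⟩, ⟨j + 1, hj⟩) = blue →
      ∀ (k l : ℕ) (hk : k < m) (hl : l < n),
        ((i ≤ k ∧ j + 1 ≤ l) ∨ (k < i ∧ l ≤ j)) →
        (c (⟨k, hk⟩, ⟨l, hl⟩) = red ∨ c (⟨k, hk⟩, ⟨l, hl⟩) = blue)) ∧
    (∀ (i j : ℕ) (hi1 : 1 ≤ i) (hi : i < m) (hj1 : 1 ≤ j) (hj : j < n),
      c (⟨i, hi⟩, ⟨j, hj⟩) = red →
      c (⟨i - 1, by omega⟩, ⟨j - 1, by omega⟩) = blue →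
      ∀ (k l : ℕ) (hk : k < m) (hl : l < n),
        ((i ≤ k ∧ l < j) ∨ (k < i ∧ j ≤ l)) →
        (c (⟨k, hk⟩, ⟨l, hl⟩) = red ∨ c (⟨k, hk⟩, ⟨l, hl⟩) = blue)) := by
  constructor
  · intro i j hi1 hi hj hA hB k l hk hl hreg
    by_contra hcon
    push_neg at hcon
    obtain ⟨h1, h2⟩ := hcon
    apply hnr
    apply rainbow_of_mid _ c (⟨i, hi⟩, ⟨j, by omega⟩) (⟨k, hk⟩, ⟨l, hl⟩)
      (⟨i - 1, by omega⟩, ⟨j + 1, hj⟩)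
    · rw [grid_dist, grid_dist]
      dsimp only
      omega
    · rw [hA]; exact fun h => h1 h.symm
    · rw [hB]; exact h2
    · rw [hA, hB]; exact hrb
  · intro i j hi1 hi hj1 hj hA hB k l hk hl hreg
    by_contra hcon
    push_neg at hcon
    obtain ⟨h1, h2⟩ := hcon
    apply hnr
    apply rainbow_of_mid _ c (⟨i, hi⟩, ⟨j, hj⟩) (⟨k, hk⟩, ⟨l, hl⟩)
      (⟨i - 1, by omega⟩, ⟨j - 1, by omega⟩)
    · rw [grid_dist, grid_dist]
      dsimp only
      omega
    · rw [hA]; exact fun h => h1 h.symm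
    · rw [hB]; exact h2
    · rw [hA, hB]; exact hrb
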